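/- arXiv:1311.2081 — 3 statements merged into one kernel-verified Lean document; each statement's English description precedes it below -/
import Mathlib

section
/- Let d ≥ 1 and let σ₀, σ₁, σ∞ ∈ S_d be permutations with σ∞ σ₁ σ₀ = 1 generating a transitive subgroup of S_d. Define the excess e(σ) of a permutation σ ∈ S_d to be d minus the number of orbits of ⟨σ⟩ on {1,...,d}. Then the quantity g = 1 - d + (e(σ₀) + e(σ₁) + e(σ∞))/2 is a nonnegative integer. -/
/-- The excess of a permutation `σ` of `Fin d`: `d` minus the number of orbits
of `⟨σ⟩` on `{1, …, d}`. -/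
noncomputable def permExcess (d : ℕ) (σ : Equiv.Perm (Fin d)) : ℕ :=
  d - Nat.card (Quotient (MulAction.orbitRel (Subgroup.zpowers σ) (Fin d)))

open Equiv Equiv.Perm Subgroup MulAction

section Merge

variable {α : Type*}

/-- The setoid obtained from `s` by merging the classes of `a` and `b`. -/
def mergeSetoid (s : Setoid α) (a b : α) : Setoid α where
  r x y := s x y ∨ (s x a ∧ s b y) ∨ (s x b ∧ s a y)
  iseqv := by
    constructor
    · intro x; exact Or.inl (s.refl x)
    · rintro x y (h | ⟨h1, h2⟩ | ⟨h1, h2⟩)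
      · exact Or.inl (s.symm h)
      · exact Or.inr (Or.inr ⟨s.symm h2, s.symm h1⟩)
      · exact Or.inr (Or.inl ⟨s.symm h2, s.symm h1⟩)
    · rintro x y z (h | ⟨h1, h2⟩ | ⟨h1, h2⟩) (h' | ⟨h1', h2'⟩ | ⟨h1', h2'⟩)
      · exact Or.inl (s.trans h h')
      · exact Or.inr (Or.inl ⟨s.trans h h1', h2'⟩)
      · exact Or.inr (Or.inr ⟨s.trans h h1', h2'⟩)
      · exact Or.inr (Or.inl ⟨h1, s.trans h2 h'⟩)
      · exact Or.inl (s.trans (s.trans h1 (s.symm (s.trans h2 h1'))) h2')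
      · exact Or.inl (s.trans h1 h2')
      · exact Or.inr (Or.inr ⟨h1, s.trans h2 h'⟩)
      · exact Or.inl (s.trans h1 h2')
      · exact Or.inl (s.trans (s.trans h1 (s.symm (s.trans h2 h1'))) h2')

lemma mergeSetoid_rel {s : Setoid α} {a b x y : α} :
    mergeSetoid s a b x y ↔ s x y ∨ (s x a ∧ s b y) ∨ (s x b ∧ s a y) := Iff.rfl

lemma mergeSetoid_eq_of_rel {s : Setoid α} {a b : α} (h : s a b) : mergeSetoid s a b = s := by
  refine Setoid.ext fun x y => ?_
  rw [mergeSetoid_rel]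
  constructor
  · rintro (h' | ⟨h1, h2⟩ | ⟨h1, h2⟩)
    · exact h'
    · exact s.trans (s.trans h1 h) h2
    · exact s.trans (s.trans h1 (s.symm h)) h2
  · exact Or.inl

/-- Merging two distinct classes decreases the number of classes by exactly one. -/
lemma card_quotient_mergeSetoid [Finite α] (s : Setoid α) {a b : α} (h : ¬ s a b) :
    Nat.card (Quotient s) = Nat.card (Quotient (mergeSetoid s a b)) + 1 := by
  set f : Quotient s → Quotient (mergeSetoid s a b) :=
    Quotient.map' id (fun x y hxy => Or.inl hxy) with hf
  have hfmk : ∀ x : α, f (Quotient.mk s x) = Quotient.mk (mergeSetoid s a b) x :=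
    fun x => rfl
  have key : Function.Bijective
      (fun q : {q : Quotient s // q ≠ Quotient.mk s b} => f q.1) := by
    constructor
    · rintro ⟨x, hx⟩ ⟨y, hy⟩ hxy
      induction x using Quotient.ind with | _ u =>
      induction y using Quotient.ind with | _ v =>
      simp only [hfmk] at hxy
      have := Quotient.exact hxy
      rcases this with h' | ⟨h1, h2⟩ | ⟨h1, h2⟩
      · exact Subtype.ext (Quotient.sound h')
      · exact absurd (Quotient.sound (s.symm h2)) hy
      · exact absurd (Quotient.sound h1) hx
    · intro q
      induction q using Quotient.ind with | _ u =>
      by_cases hu : s u b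
      · refine ⟨⟨Quotient.mk s a, fun hc => h (Quotient.exact hc)⟩, ?_⟩
        simp only [hfmk]
        exact Quotient.sound (Or.inr (Or.inl ⟨s.refl a, s.symm hu⟩))
      · exact ⟨⟨Quotient.mk s u, fun hc => hu (Quotient.exact hc)⟩, rfl⟩
  have h1 : Nat.card {q : Quotient s // q ≠ Quotient.mk s b}
      = Nat.card (Quotient (mergeSetoid s a b)) := Nat.card_eq_of_bijective _ key
  have h2 : Nat.card (Quotient s)
      = Nat.card {q : Quotient s // q ≠ Quotient.mk s b} + 1 := by
    classical
    rw [← Nat.card_eq_of_bijective _ (Equiv.optionSubtypeNe (Quotient.mk s b)).bijective,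
      Finite.card_option]
  rw [h2, h1]

end Merge

section OrbCount

variable {d : ℕ}

/-- Number of orbits of a subgroup of permutations of `Fin d`. -/
noncomputable def orbCount (H : Subgroup (Equiv.Perm (Fin d))) : ℕ :=
  Nat.card (Quotient (MulAction.orbitRel H (Fin d)))

/-- Number of cycles (orbits, counting fixed points) of a permutation. -/
noncomputable def cyc (σ : Equiv.Perm (Fin d)) : ℕ := orbCount (Subgroup.zpowers σ)

lemma permExcess_eq (σ : Equiv.Perm (Fin d)) : permExcess d σ = d - cyc σ := rfl

lemma orbCount_le (H : Subgroup (Equiv.Perm (Fin d))) : orbCount H ≤ d := by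
  have : Nat.card (Quotient (MulAction.orbitRel H (Fin d))) ≤ Nat.card (Fin d) :=
    Nat.card_le_card_of_surjective _ (Quotient.mk_surjective)
  simpa [orbCount] using this

lemma rel_mono {H K : Subgroup (Equiv.Perm (Fin d))} (hHK : H ≤ K) {x y : Fin d}
    (h : MulAction.orbitRel H (Fin d) x y) : MulAction.orbitRel K (Fin d) x y := by
  rw [MulAction.orbitRel_apply] at *
  obtain ⟨⟨g, hg⟩, hgy⟩ := h
  exact ⟨⟨g, hHK hg⟩, hgy⟩

lemma rel_of_mem {K : Subgroup (Equiv.Perm (Fin d))} {g : Equiv.Perm (Fin d)} (hg : g ∈ K)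
    {x y : Fin d} (hxy : g y = x) : MulAction.orbitRel K (Fin d) x y := by
  rw [MulAction.orbitRel_apply]
  exact ⟨⟨g, hg⟩, hxy⟩

/-- The orbit relation of `H ⊔ ⟨swap a b⟩` is obtained from that of `H` by merging the
classes of `a` and `b`. -/
lemma orbitRel_sup_swap (H : Subgroup (Equiv.Perm (Fin d))) (a b : Fin d) :
    MulAction.orbitRel ↥(H ⊔ Subgroup.closure {Equiv.swap a b}) (Fin d)
      = mergeSetoid (MulAction.orbitRel H (Fin d)) a b := by
  set t := Equiv.swap a b with ht
  set K := H ⊔ Subgroup.closure {t} with hK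
  have hHK : H ≤ K := le_sup_left
  have htK : t ∈ K := Subgroup.mem_sup_right (Subgroup.subset_closure rfl)
  refine Setoid.ext fun x y => ?_
  constructor
  · intro hxy
    rw [MulAction.orbitRel_apply] at hxy
    obtain ⟨⟨g, hg⟩, hgy⟩ := hxy
    have hKc : K = Subgroup.closure ((H : Set (Equiv.Perm (Fin d))) ∪ {t}) := by
      rw [Subgroup.closure_union, Subgroup.closure_eq]
    rw [hKc] at hg
    have main : ∀ g, g ∈ Subgroup.closure ((H : Set (Equiv.Perm (Fin d))) ∪ {t}) →
        ∀ z : Fin d, mergeSetoid (MulAction.orbitRel H (Fin d)) a b (g z) z := by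
      intro g hg
      induction hg using Subgroup.closure_induction with
      | mem g hg =>
        intro z
        rcases hg with hg | hg
        · exact Or.inl (rel_of_mem hg rfl)
        · simp only [Set.mem_singleton_iff] at hg
          subst hg
          by_cases hza : z = a
          · rw [hza, Equiv.swap_apply_left]
            exact Or.inr (Or.inr ⟨(MulAction.orbitRel H (Fin d)).refl b,
              (MulAction.orbitRel H (Fin d)).refl a⟩)
          · by_cases hzb : z = b
            · rw [hzb, Equiv.swap_apply_right]
              exact Or.inr (Or.inl ⟨(MulAction.orbitRel H (Fin d)).refl a,
                (MulAction.orbitRel H (Fin d)).refl b⟩)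
            · rw [Equiv.swap_apply_of_ne_of_ne hza hzb]
      | one => intro z; simpa using (mergeSetoid (MulAction.orbitRel H (Fin d)) a b).refl z
      | mul g g' hg hg' ihg ihg' =>
        intro z
        have h1 := ihg' z
        have h2 := ihg (g' z)
        simpa using (mergeSetoid (MulAction.orbitRel H (Fin d)) a b).trans h2 h1
      | inv g hg ihg =>
        intro z
        have := ihg (g⁻¹ z)
        simp only [Equiv.Perm.coe_inv, Equiv.apply_symm_apply] at this
        exact (mergeSetoid (MulAction.orbitRel H (Fin d)) a b).symm this
    have := main g hg y
    have hsmul : (⟨g, by rw [hKc]; exact hg⟩ : K) • y = g y := rfl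
    rw [← hgy]
    simpa [hsmul] using this
  · have hrK : ∀ u v : Fin d, MulAction.orbitRel H (Fin d) u v →
        MulAction.orbitRel K (Fin d) u v := fun u v h => rel_mono hHK h
    have hab : MulAction.orbitRel K (Fin d) a b := rel_of_mem htK (Equiv.swap_apply_right a b)
    rintro (h | ⟨h1, h2⟩ | ⟨h1, h2⟩)
    · exact hrK _ _ h
    · exact (MulAction.orbitRel K (Fin d)).trans (hrK _ _ h1)
        ((MulAction.orbitRel K (Fin d)).trans hab (hrK _ _ h2))
    · exact (MulAction.orbitRel K (Fin d)).trans (hrK _ _ h1)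
        ((MulAction.orbitRel K (Fin d)).trans ((MulAction.orbitRel K (Fin d)).symm hab)
          (hrK _ _ h2))

lemma orbCount_sup_swap_of_rel {H : Subgroup (Equiv.Perm (Fin d))} {a b : Fin d}
    (h : MulAction.orbitRel H (Fin d) a b) :
    orbCount (H ⊔ Subgroup.closure {Equiv.swap a b}) = orbCount H := by
  unfold orbCount
  rw [orbitRel_sup_swap, mergeSetoid_eq_of_rel h]

lemma orbCount_sup_swap_of_not_rel {H : Subgroup (Equiv.Perm (Fin d))} {a b : Fin d}
    (h : ¬ MulAction.orbitRel H (Fin d) a b) :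
    orbCount H = orbCount (H ⊔ Subgroup.closure {Equiv.swap a b}) + 1 := by
  unfold orbCount
  rw [orbitRel_sup_swap]
  exact card_quotient_mergeSetoid _ h

lemma rel_zpowers_iff {ρ : Equiv.Perm (Fin d)} {x y : Fin d} :
    MulAction.orbitRel (Subgroup.zpowers ρ) (Fin d) x y ↔ ρ.SameCycle y x := by
  rw [MulAction.orbitRel_apply, MulAction.mem_orbit_iff]
  constructor
  · rintro ⟨⟨g, i, rfl⟩, hg⟩
    exact ⟨i, hg⟩
  · rintro ⟨i, hi⟩
    exact ⟨⟨ρ ^ i, i, rfl⟩, hi⟩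

end OrbCount

section SwapCycle

variable {d : ℕ}

lemma sameCycle_swap_mul_of_not {a b : Fin d} (hab : a ≠ b) {ρ : Equiv.Perm (Fin d)}
    (h : ¬ ρ.SameCycle a b) : ((Equiv.swap a b) * ρ).SameCycle a b := by
  set t := Equiv.swap a b with ht
  have hP : ∃ k, 0 < k ∧ (ρ ^ k) a = a :=
    ⟨orderOf ρ, orderOf_pos ρ, by rw [pow_orderOf_eq_one]; rfl⟩
  set k := Nat.find hP with hk
  obtain ⟨hkpos, hka⟩ := Nat.find_spec hP
  have claim : ∀ j, j < k → ((t * ρ) ^ j) a = (ρ ^ j) a := by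
    intro j
    induction j with
    | zero => intro _; simp
    | succ j ih =>
      intro hj
      have hj' : j < k := Nat.lt_of_succ_lt hj
      have hna : (ρ ^ (j + 1)) a ≠ a := by
        intro hc
        exact absurd ⟨Nat.succ_pos j, hc⟩ (Nat.find_min hP hj)
      have hnb : (ρ ^ (j + 1)) a ≠ b := by
        intro hc
        exact h ⟨((j + 1 : ℕ) : ℤ), by rw [zpow_natCast]; exact hc⟩
      calc ((t * ρ) ^ (j + 1)) a = (t * ρ) (((t * ρ) ^ j) a) := by
              rw [pow_succ', Equiv.Perm.mul_apply]
        _ = t ((ρ ^ (j + 1)) a) := by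
              rw [ih hj', Equiv.Perm.mul_apply, ← Equiv.Perm.mul_apply ρ, ← pow_succ']
        _ = (ρ ^ (j + 1)) a := Equiv.swap_apply_of_ne_of_ne hna hnb
  obtain ⟨m, hm⟩ : ∃ m, k = m + 1 := ⟨k - 1, (Nat.succ_pred_eq_of_pos hkpos).symm⟩
  refine ⟨((k : ℕ) : ℤ), ?_⟩
  rw [zpow_natCast]
  have hma : (ρ ^ m) a = ρ⁻¹ a := by
    have : ρ ((ρ ^ m) a) = ρ (ρ⁻¹ a) := by
      rw [Equiv.Perm.coe_inv, Equiv.apply_symm_apply, ← Equiv.Perm.mul_apply, ← pow_succ', ← hm]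
      exact hka
    exact ρ.injective this
  calc ((t * ρ) ^ k) a = (t * ρ) (((t * ρ) ^ m) a) := by
        rw [hm, pow_succ', Equiv.Perm.mul_apply]
    _ = t (ρ ((ρ ^ m) a)) := by rw [claim m (by omega), Equiv.Perm.mul_apply]
    _ = t a := by rw [hma, Equiv.Perm.coe_inv, Equiv.apply_symm_apply]
    _ = b := Equiv.swap_apply_left a b

lemma not_sameCycle_swap_mul_of {a b : Fin d} (hab : a ≠ b) {ρ : Equiv.Perm (Fin d)}
    (h : ρ.SameCycle a b) : ¬ ((Equiv.swap a b) * ρ).SameCycle a b := by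
  set t := Equiv.swap a b with ht
  have hP : ∃ k, 0 < k ∧ (ρ ^ k) a = b := by
    obtain ⟨i, hipos, _, hi⟩ := h.exists_pow_eq''
    exact ⟨i, hipos, hi⟩
  set k := Nat.find hP with hk
  obtain ⟨hkpos, hka⟩ := Nat.find_spec hP
  have claim : ∀ j, j < k → ((t * ρ) ^ j) a = (ρ ^ j) a := by
    intro j
    induction j with
    | zero => intro _; simp
    | succ j ih =>
      intro hj
      have hj' : j < k := Nat.lt_of_succ_lt hj
      have hnb : (ρ ^ (j + 1)) a ≠ b := by
        intro hc
        exact absurd ⟨Nat.succ_pos j, hc⟩ (Nat.find_min hP hj)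
      have hna : (ρ ^ (j + 1)) a ≠ a := by
        intro hc
        have hj2 : j + 1 ≤ k := le_of_lt hj
        have hsum : k - (j + 1) + (j + 1) = k := Nat.sub_add_cancel hj2
        have hb2 : (ρ ^ (k - (j + 1))) a = b := by
          calc (ρ ^ (k - (j + 1))) a = (ρ ^ (k - (j + 1))) ((ρ ^ (j + 1)) a) := by rw [hc]
            _ = (ρ ^ (k - (j + 1) + (j + 1))) a := by
                  rw [pow_add ρ (k - (j + 1)) (j + 1), Equiv.Perm.mul_apply]
            _ = b := by rw [hsum]; exact hka
        have hpos : 0 < k - (j + 1) := by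
          rcases Nat.eq_or_lt_of_le hj2 with heq | _
          · exfalso
            rw [heq] at hc
            rw [hc] at hka
            exact hab hka
          · omega
        exact absurd ⟨hpos, hb2⟩ (Nat.find_min hP (by omega))
      calc ((t * ρ) ^ (j + 1)) a = (t * ρ) (((t * ρ) ^ j) a) := by
              rw [pow_succ', Equiv.Perm.mul_apply]
        _ = t ((ρ ^ (j + 1)) a) := by
              rw [ih hj', Equiv.Perm.mul_apply, ← Equiv.Perm.mul_apply ρ, ← pow_succ']
        _ = (ρ ^ (j + 1)) a := Equiv.swap_apply_of_ne_of_ne hna hnb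
  have hfix : ((t * ρ) ^ k) a = a := by
    obtain ⟨m, hm⟩ : ∃ m, k = m + 1 := ⟨k - 1, (Nat.succ_pred_eq_of_pos hkpos).symm⟩
    have hmb : ρ ((ρ ^ m) a) = b := by
      rw [← Equiv.Perm.mul_apply, ← pow_succ', ← hm]; exact hka
    calc ((t * ρ) ^ k) a = (t * ρ) (((t * ρ) ^ m) a) := by
          rw [hm, pow_succ', Equiv.Perm.mul_apply]
      _ = t (ρ ((ρ ^ m) a)) := by rw [claim m (by omega), Equiv.Perm.mul_apply]
      _ = t b := by rw [hmb]
      _ = a := Equiv.swap_apply_right a b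
  have hmod : ∀ n : ℕ, ((t * ρ) ^ n) a = ((t * ρ) ^ (n % k)) a := by
    intro n
    induction n using Nat.strong_induction_on with
    | _ n ih =>
      rcases lt_or_ge n k with hlt | hge
      · rw [Nat.mod_eq_of_lt hlt]
      · have hsum : n - k + k = n := Nat.sub_add_cancel hge
        have h1 : ((t * ρ) ^ n) a = ((t * ρ) ^ (n - k)) a := by
          conv_lhs => rw [← hsum]
          rw [pow_add, Equiv.Perm.mul_apply, hfix]
        rw [h1, ih (n - k) (by omega), ← Nat.add_mod_right (n - k) k, hsum]
  intro hc
  obtain ⟨i, hipos, _, hi⟩ := hc.exists_pow_eq''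
  rw [hmod i] at hi
  have hikm : i % k < k := Nat.mod_lt _ hkpos
  rw [claim _ hikm] at hi
  by_cases h0 : i % k = 0
  · rw [h0] at hi; simp at hi; exact hab hi
  · exact absurd ⟨Nat.pos_of_ne_zero h0, hi⟩ (Nat.find_min hP hikm)

end SwapCycle

section CycLemmas

variable {d : ℕ}

lemma zpowers_sup_swap_eq (a b : Fin d) (ρ : Equiv.Perm (Fin d)) :
    Subgroup.zpowers (Equiv.swap a b * ρ) ⊔ Subgroup.closure {Equiv.swap a b}
      = Subgroup.zpowers ρ ⊔ Subgroup.closure {Equiv.swap a b} := by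
  set t := Equiv.swap a b with ht
  have htt : t * t = 1 := by rw [ht, Equiv.swap_mul_self]
  apply le_antisymm
  · refine sup_le ?_ le_sup_right
    rw [Subgroup.zpowers_le]
    exact mul_mem (Subgroup.mem_sup_right (Subgroup.subset_closure rfl))
      (Subgroup.mem_sup_left (Subgroup.mem_zpowers ρ))
  · refine sup_le ?_ le_sup_right
    rw [Subgroup.zpowers_le]
    have h2 : t * (t * ρ) ∈ Subgroup.zpowers (t * ρ) ⊔ Subgroup.closure {t} :=
      mul_mem (Subgroup.mem_sup_right (Subgroup.subset_closure rfl))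
        (Subgroup.mem_sup_left (Subgroup.mem_zpowers _))
    rwa [← mul_assoc, htt, one_mul] at h2

lemma closure_pair_sup_swap_eq (a b : Fin d) (σ τ : Equiv.Perm (Fin d)) :
    Subgroup.closure {Equiv.swap a b * σ, τ} ⊔ Subgroup.closure {Equiv.swap a b}
      = Subgroup.closure {σ, τ} ⊔ Subgroup.closure {Equiv.swap a b} := by
  set t := Equiv.swap a b with ht
  have htt : t * t = 1 := by rw [ht, Equiv.swap_mul_self]
  apply le_antisymm
  · refine sup_le ?_ le_sup_right
    rw [Subgroup.closure_le]
    rintro x (rfl | rfl)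
    · exact mul_mem (Subgroup.mem_sup_right (Subgroup.subset_closure rfl))
        (Subgroup.mem_sup_left (Subgroup.subset_closure (Set.mem_insert _ _)))
    · exact Subgroup.mem_sup_left (Subgroup.subset_closure (Set.mem_insert_of_mem _ rfl))
  · refine sup_le ?_ le_sup_right
    rw [Subgroup.closure_le]
    rintro x (rfl | rfl)
    · have h2 : t * (t * x) ∈ Subgroup.closure {t * x, τ} ⊔ Subgroup.closure {t} :=
        mul_mem (Subgroup.mem_sup_right (Subgroup.subset_closure rfl))
          (Subgroup.mem_sup_left (Subgroup.subset_closure (Set.mem_insert _ _)))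
      rwa [← mul_assoc, htt, one_mul] at h2
    · exact Subgroup.mem_sup_left (Subgroup.subset_closure (Set.mem_insert_of_mem _ rfl))

lemma cyc_swap_mul_of_sameCycle {a b : Fin d} (hab : a ≠ b) {ρ : Equiv.Perm (Fin d)}
    (h : ρ.SameCycle a b) : cyc (Equiv.swap a b * ρ) = cyc ρ + 1 := by
  have h1 : orbCount (Subgroup.zpowers ρ ⊔ Subgroup.closure {Equiv.swap a b}) = cyc ρ :=
    orbCount_sup_swap_of_rel (rel_zpowers_iff.mpr h.symm)
  have h2 : ¬ ((Equiv.swap a b) * ρ).SameCycle a b := not_sameCycle_swap_mul_of hab h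
  have h3 : cyc (Equiv.swap a b * ρ)
      = orbCount (Subgroup.zpowers (Equiv.swap a b * ρ) ⊔ Subgroup.closure {Equiv.swap a b})
        + 1 :=
    orbCount_sup_swap_of_not_rel (fun hc => h2 (rel_zpowers_iff.mp hc).symm)
  rw [h3, zpowers_sup_swap_eq, h1]

lemma cyc_swap_mul_of_not_sameCycle {a b : Fin d} (hab : a ≠ b) {ρ : Equiv.Perm (Fin d)}
    (h : ¬ ρ.SameCycle a b) : cyc ρ = cyc (Equiv.swap a b * ρ) + 1 := by
  have h1 : cyc ρ = orbCount (Subgroup.zpowers ρ ⊔ Subgroup.closure {Equiv.swap a b}) + 1 :=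
    orbCount_sup_swap_of_not_rel (fun hc => h (rel_zpowers_iff.mp hc).symm)
  have h2 : ((Equiv.swap a b) * ρ).SameCycle a b := sameCycle_swap_mul_of_not hab h
  have h3 : orbCount (Subgroup.zpowers (Equiv.swap a b * ρ) ⊔ Subgroup.closure {Equiv.swap a b})
      = cyc (Equiv.swap a b * ρ) :=
    orbCount_sup_swap_of_rel (rel_zpowers_iff.mpr h2.symm)
  rw [h1, ← zpowers_sup_swap_eq a b ρ, h3]

lemma cyc_one (d : ℕ) : cyc (1 : Equiv.Perm (Fin d)) = d := by
  have hbij : Function.Bijective (Quotient.mk (MulAction.orbitRel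
      (Subgroup.zpowers (1 : Equiv.Perm (Fin d))) (Fin d))) := by
    constructor
    · intro x y hxy
      have h2 : MulAction.orbitRel
          ↥(Subgroup.zpowers (1 : Equiv.Perm (Fin d))) (Fin d) x y := Quotient.exact hxy
      obtain ⟨i, hi⟩ := rel_zpowers_iff.mp h2
      simpa using hi.symm
    · exact Quotient.mk_surjective
  have := Nat.card_eq_of_bijective _ hbij
  simpa [cyc, orbCount] using this.symm

end CycLemmas

section Main

variable {d : ℕ}

set_option maxHeartbeats 1000000 in
/-- The main induction: genus equation with orbit count of the generated group. -/
lemma main_aux (d : ℕ) : ∀ n (σ τ : Equiv.Perm (Fin d)), d - cyc σ = n →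
    ∃ g, cyc σ + cyc τ + cyc (σ * τ) + 2 * g
      = d + 2 * orbCount (Subgroup.closure {σ, τ}) := by
  intro n
  induction n using Nat.strong_induction_on with
  | _ n ih =>
    intro σ τ hn
    by_cases hσ : σ = 1
    · subst hσ
      refine ⟨0, ?_⟩
      have hcl : Subgroup.closure ({1, τ} : Set (Equiv.Perm (Fin d)))
          = Subgroup.zpowers τ := by
        apply le_antisymm
        · rw [Subgroup.closure_le]
          rintro x (rfl | rfl)
          · exact one_mem _
          · exact Subgroup.mem_zpowers _
        · rw [Subgroup.zpowers_eq_closure]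
          exact Subgroup.closure_mono (Set.singleton_subset_iff.mpr
            (Set.mem_insert_of_mem _ rfl))
      rw [one_mul, cyc_one, hcl]
      show d + cyc τ + cyc τ + 2 * 0 = d + 2 * cyc τ
      ring
    · obtain ⟨a, ha⟩ : ∃ a, σ a ≠ a := by
        by_contra hc
        push_neg at hc
        exact hσ (Equiv.ext hc)
      set b := σ a with hb
      have hab : a ≠ b := fun hc => ha hc.symm
      set t := Equiv.swap a b with ht
      set σ' := t * σ with hσ'
      have hσ'a : σ' a = a := by
        rw [hσ', Equiv.Perm.mul_apply, ← hb, ht, Equiv.swap_apply_right]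
      have hnc' : ¬ σ'.SameCycle a b := fun hc => hab (hc.eq_of_left hσ'a)
      have hcσ : σ.SameCycle a b := ⟨1, by rw [zpow_one, hb]⟩
      -- `cyc σ' = cyc σ + 1`
      have hstep : cyc σ' = cyc σ + 1 := by
        have e1 : orbCount (Subgroup.zpowers σ ⊔ Subgroup.closure {t}) = cyc σ :=
          orbCount_sup_swap_of_rel (rel_zpowers_iff.mpr hcσ.symm)
        have e2 : cyc σ'
            = orbCount (Subgroup.zpowers σ' ⊔ Subgroup.closure {t}) + 1 :=
          orbCount_sup_swap_of_not_rel
            (fun hc => hnc' (rel_zpowers_iff.mp hc).symm)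
        rw [e2, hσ', ht, zpowers_sup_swap_eq, ← ht, e1]
      have hle : cyc σ' ≤ d := orbCount_le _
      have hfuel : d - cyc σ' < n := by omega
      obtain ⟨g', hg'⟩ := ih (d - cyc σ') hfuel σ' τ rfl
      set ρ := σ' * τ with hρ
      have hστ : σ * τ = t * ρ := by
        rw [hρ, hσ', ← mul_assoc, ← mul_assoc, ht, Equiv.swap_mul_self, one_mul]
      -- group orbit bookkeeping
      have hGa : MulAction.orbitRel (Subgroup.closure {σ, τ}) (Fin d) a b := by
        refine rel_of_mem (inv_mem (Subgroup.subset_closure (Set.mem_insert _ _))) ?_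
        rw [hb]; exact σ.symm_apply_apply a
      have hGK : orbCount (Subgroup.closure {σ, τ} ⊔ Subgroup.closure {t})
          = orbCount (Subgroup.closure {σ, τ}) := orbCount_sup_swap_of_rel hGa
      have hKK' : Subgroup.closure {σ', τ} ⊔ Subgroup.closure {t}
          = Subgroup.closure {σ, τ} ⊔ Subgroup.closure {t} := by
        rw [hσ', ht]
        exact closure_pair_sup_swap_eq a b σ τ
      by_cases hρc : ρ.SameCycle a b
      · -- split case: `cyc (σ*τ) = cyc ρ + 1` and orbit counts agree
        have hc1 : cyc (σ * τ) = cyc ρ + 1 := by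
          rw [hστ, ht]; exact cyc_swap_mul_of_sameCycle hab hρc
        have hρmem : ρ ∈ Subgroup.closure {σ', τ} := by
          rw [hρ]
          exact mul_mem (Subgroup.subset_closure (Set.mem_insert _ _))
            (Subgroup.subset_closure (Set.mem_insert_of_mem _ rfl))
        have hG'a : MulAction.orbitRel (Subgroup.closure {σ', τ}) (Fin d) a b := by
          obtain ⟨i, hi⟩ := hρc.symm
          exact rel_of_mem (zpow_mem hρmem i) hi
        have hG' : orbCount (Subgroup.closure {σ', τ} ⊔ Subgroup.closure {t})
            = orbCount (Subgroup.closure {σ', τ}) := orbCount_sup_swap_of_rel hG'a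
        refine ⟨g', ?_⟩
        have : orbCount (Subgroup.closure {σ', τ}) = orbCount (Subgroup.closure {σ, τ}) := by
          rw [← hG', hKK', hGK]
        omega
      · -- merge case: `cyc ρ = cyc (σ*τ) + 1`
        have hc1 : cyc ρ = cyc (σ * τ) + 1 := by
          rw [hστ, ht]; exact cyc_swap_mul_of_not_sameCycle hab hρc
        by_cases hG'rel : MulAction.orbitRel (Subgroup.closure {σ', τ}) (Fin d) a b
        · have hG' : orbCount (Subgroup.closure {σ', τ} ⊔ Subgroup.closure {t})
              = orbCount (Subgroup.closure {σ', τ}) := orbCount_sup_swap_of_rel hG'rel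
          have heq : orbCount (Subgroup.closure {σ', τ})
              = orbCount (Subgroup.closure {σ, τ}) := by
            rw [← hG', hKK', hGK]
          exact ⟨g' + 1, by omega⟩
        · have hG' : orbCount (Subgroup.closure {σ', τ})
              = orbCount (Subgroup.closure {σ', τ} ⊔ Subgroup.closure {t}) + 1 :=
            orbCount_sup_swap_of_not_rel hG'rel
          have heq : orbCount (Subgroup.closure {σ', τ})
              = orbCount (Subgroup.closure {σ, τ}) + 1 := by
            rw [hG', hKK', hGK]
          exact ⟨g', by omega⟩

end Main

/-- Riemann–Hurwitz: for a transitive permutation triple of degree `d`, the genus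
`g = 1 - d + (e(σ₀) + e(σ₁) + e(σinf))/2` is a nonnegative integer. -/
theorem genus_of_transitive_triple (d : ℕ) (hd : 1 ≤ d)
    (σ₀ σ₁ σinf : Equiv.Perm (Fin d)) (hprod : σinf * σ₁ * σ₀ = 1)
    (htrans : ∀ i j : Fin d, ∃ g ∈ Subgroup.closure {σ₀, σ₁, σinf}, g i = j) :
    ∃ g : ℕ, (g : ℚ) =
      1 - d + ((permExcess d σ₀ + permExcess d σ₁ + permExcess d σinf : ℕ) : ℚ) / 2 := by
  have hinv : σinf = (σ₁ * σ₀)⁻¹ := by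
    apply eq_inv_of_mul_eq_one_left
    rw [← mul_assoc]; exact hprod
  -- transitivity for `closure {σ₁, σ₀}`
  have hsub : Subgroup.closure ({σ₀, σ₁, σinf} : Set (Equiv.Perm (Fin d)))
      ≤ Subgroup.closure {σ₁, σ₀} := by
    rw [Subgroup.closure_le]
    rintro x (rfl | rfl | rfl)
    · exact Subgroup.subset_closure (Set.mem_insert_of_mem _ rfl)
    · exact Subgroup.subset_closure (Set.mem_insert _ _)
    · rw [hinv]
      exact inv_mem (mul_mem (Subgroup.subset_closure (Set.mem_insert _ _))
        (Subgroup.subset_closure (Set.mem_insert_of_mem _ rfl)))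
  have horb : orbCount (Subgroup.closure {σ₁, σ₀}) = 1 := by
    rw [orbCount, Nat.card_eq_one_iff_unique]
    constructor
    · constructor
      intro q q'
      induction q using Quotient.ind with | _ i =>
      induction q' using Quotient.ind with | _ j =>
      obtain ⟨g, hg, hgji⟩ := htrans j i
      exact Quotient.sound (rel_of_mem (hsub hg) hgji)
    · exact ⟨Quotient.mk _ ⟨0, hd⟩⟩
  obtain ⟨g, hg⟩ := main_aux d (d - cyc σ₁) σ₁ σ₀ rfl
  rw [horb] at hg
  have hcinf : cyc σinf = cyc (σ₁ * σ₀) := by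
    rw [hinv, cyc, cyc, Subgroup.zpowers_inv]
  have h0 : cyc σ₀ ≤ d := orbCount_le _
  have h1 : cyc σ₁ ≤ d := orbCount_le _
  have hinf : cyc σinf ≤ d := orbCount_le _
  refine ⟨g, ?_⟩
  rw [permExcess_eq, permExcess_eq, permExcess_eq]
  have e0 : ((d - cyc σ₀ : ℕ) : ℚ) = (d : ℚ) - cyc σ₀ := by rw [Nat.cast_sub h0]
  have e1 : ((d - cyc σ₁ : ℕ) : ℚ) = (d : ℚ) - cyc σ₁ := by rw [Nat.cast_sub h1]
  have einf : ((d - cyc σinf : ℕ) : ℚ) = (d : ℚ) - cyc σinf := by rw [Nat.cast_sub hinf]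
  have hgQ : (cyc σ₁ : ℚ) + cyc σ₀ + cyc σinf + 2 * g = d + 2 := by
    rw [hcinf]; exact_mod_cast hg
  push_cast [e0, e1, einf]
  linarith
end

section
/- For real numbers A, B, C with C - A - B > 0 and C not a nonpositive integer, the hypergeometric series F(A,B,C;t) = Σ_{n≥0} (A)_n (B)_n / ((C)_n n!) t^n converges at t = 1 and F(A,B,C;1) = Γ(C)Γ(C-A-B)/(Γ(C-A)Γ(C-B)). -/
open Polynomial

open Filter Finset Topology

section GaussAux

noncomputable def ghT (A B C : ℝ) (n : ℕ) : ℝ :=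
  (ascPochhammer ℝ n).eval A * (ascPochhammer ℝ n).eval B /
    ((ascPochhammer ℝ n).eval C * (n.factorial : ℝ))

lemma poch_prod (x : ℝ) (n : ℕ) :
    (ascPochhammer ℝ n).eval x = ∏ i ∈ Finset.range n, (x + i) := by
  induction n with
  | zero => simp
  | succ n ih => rw [ascPochhammer_succ_eval, ih, Finset.prod_range_succ]

lemma poch_ne_zero {x : ℝ} (hx : ∀ k : ℕ, x + k ≠ 0) (n : ℕ) :
    (ascPochhammer ℝ n).eval x ≠ 0 := by
  rw [poch_prod]; exact Finset.prod_ne_zero_iff.2 fun i _ => hx i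

lemma poch_abs_le (x : ℝ) (n : ℕ) :
    |(ascPochhammer ℝ n).eval x| ≤ (ascPochhammer ℝ n).eval |x| := by
  rw [poch_prod, poch_prod, Finset.abs_prod]
  refine Finset.prod_le_prod (fun i _ => abs_nonneg _) fun i _ => ?_
  calc |x + (i:ℝ)| ≤ |x| + |(i:ℝ)| := abs_add_le _ _
  _ = |x| + i := by rw [Nat.abs_cast]

lemma poch_mono {x y : ℝ} (hx : 0 < x) (hxy : x ≤ y) (n : ℕ) :
    (ascPochhammer ℝ n).eval x ≤ (ascPochhammer ℝ n).eval y := by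
  rw [poch_prod, poch_prod]
  exact Finset.prod_le_prod (fun i _ => by positivity) fun i _ => by linarith

lemma poch_ge_self {x : ℝ} (hx : 1 ≤ x) {n : ℕ} (hn : n ≠ 0) :
    x ≤ (ascPochhammer ℝ n).eval x := by
  obtain ⟨m, rfl⟩ := Nat.exists_eq_succ_of_ne_zero hn
  rw [poch_prod, Finset.prod_range_succ']
  have h1 : (1:ℝ) ≤ ∏ i ∈ Finset.range m, (x + (i + 1 : ℕ)) := by
    calc (1:ℝ) = ∏ _i ∈ Finset.range m, (1:ℝ) := by simp
    _ ≤ _ := Finset.prod_le_prod (fun i _ => zero_le_one) fun i _ => by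
        have : (0:ℝ) ≤ (i:ℝ) + 1 := by positivity
        push_cast
        linarith
  have hx0 : (0:ℝ) ≤ x := by linarith
  calc x = 1 * x := (one_mul x).symm
  _ ≤ (∏ i ∈ Finset.range m, (x + (i + 1 : ℕ))) * (x + ((0:ℕ):ℝ)) := by
      push_cast
      push_cast at h1
      nlinarith
  _ = _ := by norm_num

lemma ghT_zero (A B C : ℝ) : ghT A B C 0 = 1 := by simp [ghT]

lemma ghT_succ (A B C : ℝ) {n : ℕ} (hc : (ascPochhammer ℝ n).eval C ≠ 0)
    (hcn : C + n ≠ 0) :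
    ghT A B C (n + 1) = ghT A B C n * ((A + n) * (B + n)) / ((C + n) * ((n:ℝ) + 1)) := by
  have hf : (n.factorial : ℝ) ≠ 0 := Nat.cast_ne_zero.2 n.factorial_ne_zero
  simp only [ghT, ascPochhammer_succ_eval, Nat.factorial_succ, Nat.cast_mul, Nat.cast_add,
    Nat.cast_one]
  field_simp

set_option maxHeartbeats 1000000 in
variable {A B C : ℝ}
lemma ghT_bound (A B C : ℝ) (hC : ∀ k : ℕ, C + k ≠ 0) (hd : 0 < C - A - B) :
    ∃ K : ℝ, ∀ n : ℕ, |ghT A B C n| ≤ K * ((n:ℝ) + 1) ^ (-(1 + (C - A - B)/2)) := by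
  obtain ⟨p, hp⟩ : ∃ p : ℝ, p = 1 + (C - A - B)/2 := ⟨_, rfl⟩
  obtain ⟨M, hM⟩ : ∃ M : ℝ,
      M = |A| + |B| + |C| + p + 1 + |(A*B + C*((C-A-B)/2))/((C-A-B)/2)| := ⟨_, rfl⟩
  have hp1 : 1 < p := by rw [hp]; linarith
  obtain ⟨n0, hn0⟩ := eventually_atTop.mp
    ((tendsto_natCast_atTop_atTop (R := ℝ)).eventually_ge_atTop M)
  obtain ⟨v, hv⟩ : ∃ v : ℕ → ℝ, ∀ n, v n = |ghT A B C n| * ((n:ℝ)+1) ^ p :=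
    ⟨_, fun _ => rfl⟩
  have habsA : -|A| ≤ A := neg_abs_le A
  have habsB : -|B| ≤ B := neg_abs_le B
  have habsC : -|C| ≤ C := neg_abs_le C
  have hMpos : 0 ≤ |(A*B + C*((C-A-B)/2))/((C-A-B)/2)| := abs_nonneg _
  have habs0 : 0 ≤ |A| := abs_nonneg A
  have habs0' : 0 ≤ |B| := abs_nonneg B
  have habs0'' : 0 ≤ |C| := abs_nonneg C
  have hstep : ∀ n, n0 ≤ n → v (n+1) ≤ v n := by
    intro n hn
    have hMn := hn0 n hn
    rw [hM] at hMn
    have hA' : 0 < A + n := by linarith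
    have hB' : 0 < B + n := by linarith
    have hC' : 0 < C + n := by linarith
    have hpn : p < (n:ℝ) + 1 := by linarith
    have h3 : (A+n)*(B+n) ≤ (C+n)*((n:ℝ)+1-p) := by
      have hd2 : (0:ℝ) < (C-A-B)/2 := by linarith
      have h2 : (A*B + C*((C-A-B)/2))/((C-A-B)/2) ≤ (n:ℝ) :=
        le_trans (le_abs_self _) (by linarith)
      have hq : A*B + C*((C-A-B)/2) ≤ ((C-A-B)/2)*(n:ℝ) := by
        rw [div_le_iff₀ hd2] at h2; linarith
      have expand : (C+n)*((n:ℝ)+1-p) - (A+n)*(B+n)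
          = ((C-A-B)/2)*n - (A*B + C*((C-A-B)/2)) := by rw [hp]; ring
      linarith
    obtain ⟨x, hx⟩ : ∃ x : ℝ, x = 1/((n:ℝ)+1) := ⟨_, rfl⟩
    have hn1 : (0:ℝ) < (n:ℝ)+1 := by positivity
    have hx0 : 0 < x := by rw [hx]; positivity
    have hxn : x * ((n:ℝ)+1) = 1 := by rw [hx]; field_simp
    have hpx : p*x < 1 := by
      rw [hx, mul_one_div, div_lt_one hn1]; exact hpn
    have hpx0 : 0 < 1 - p*x := by linarith
    obtain ⟨q, hq⟩ : ∃ q : ℝ, q = ((A + n) * (B + n)) / ((C + n) * ((n:ℝ) + 1)) := ⟨_, rfl⟩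
    have hq0 : 0 ≤ q := by rw [hq]; positivity
    have hq1 : q ≤ 1 - p*x := by
      rw [hq, div_le_iff₀ (by positivity)]
      have heq1 : (1 - p*x) * ((C+n)*((n:ℝ)+1)) = (C+n)*((n:ℝ)+1-p) := by
        rw [hx]; field_simp
      rw [heq1]; exact h3
    have hxp : ((n:ℝ)+2) ^ p ≤ ((n:ℝ)+1) ^ p * (1/(1-p*x)) := by
      have heq : (n:ℝ)+2 = ((n:ℝ)+1) * (1+x) := by
        rw [hx]; field_simp; ring
      rw [heq, Real.mul_rpow (by positivity) (by positivity)]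
      have h1x : (1+x) ^ p ≤ Real.exp (p*x) := by
        rw [Real.rpow_def_of_pos (by positivity)]
        apply Real.exp_le_exp.2
        have hlog : Real.log (1+x) ≤ x := by
          have := Real.log_le_sub_one_of_pos (x := 1+x) (by positivity)
          linarith
        calc Real.log (1+x) * p ≤ x * p := by nlinarith
        _ = p * x := mul_comm _ _
      have hex : Real.exp (p*x) ≤ 1/(1-p*x) := by
        rw [le_div_iff₀ hpx0]
        have h := Real.add_one_le_exp (-(p*x))
        rw [Real.exp_neg] at h
        have hepos := Real.exp_pos (p*x)
        have h3' := mul_le_mul_of_nonneg_left h hepos.le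
        rw [mul_inv_cancel₀ hepos.ne'] at h3'
        have hre : Real.exp (p*x) * (1-p*x) = Real.exp (p*x) * (-(p*x)+1) := by ring
        rw [hre]; exact h3' 
      calc ((n:ℝ)+1)^p * (1+x)^p ≤ ((n:ℝ)+1)^p * Real.exp (p*x) :=
            mul_le_mul_of_nonneg_left h1x (Real.rpow_nonneg (by positivity) _)
      _ ≤ ((n:ℝ)+1)^p * (1/(1-p*x)) :=
            mul_le_mul_of_nonneg_left hex (Real.rpow_nonneg (by positivity) _)
    have hkey : q * ((n:ℝ)+2) ^ p ≤ ((n:ℝ)+1) ^ p := by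
      calc q * ((n:ℝ)+2)^p ≤ (1-p*x) * (((n:ℝ)+1)^p * (1/(1-p*x))) :=
            mul_le_mul hq1 hxp (by positivity) (le_of_lt hpx0)
      _ = ((n:ℝ)+1)^p := by field_simp
    have htn : |ghT A B C (n+1)| = |ghT A B C n| * q := by
      rw [ghT_succ A B C (poch_ne_zero hC n) (hC n), abs_div, abs_mul,
        abs_of_pos (by positivity : (0:ℝ) < (A+n)*(B+n)),
        abs_of_pos (by positivity : (0:ℝ) < (C+n)*((n:ℝ)+1)), hq, mul_div_assoc]
    rw [hv, hv, htn]
    push_cast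
    calc |ghT A B C n| * q * (((n:ℝ)+1)+1) ^ p = |ghT A B C n| * (q * ((n:ℝ)+2) ^ p) := by
          ring_nf
    _ ≤ |ghT A B C n| * ((n:ℝ)+1) ^ p := mul_le_mul_of_nonneg_left hkey (abs_nonneg _)
  have hmono : ∀ n, n0 ≤ n → v n ≤ v n0 := by
    intro n hn
    induction n, hn using Nat.le_induction with
    | base => exact le_rfl
    | succ n hn ih => exact le_trans (hstep n hn) ih
  refine ⟨(Finset.range (n0+1)).sup' ⟨0, by simp⟩ v, fun n => ?_⟩
  have hKn : v n ≤ (Finset.range (n0+1)).sup' ⟨0, by simp⟩ v := by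
    rcases le_or_gt n n0 with h | h
    · exact Finset.le_sup' v (Finset.mem_range.2 (by omega))
    · exact le_trans (hmono n (le_of_lt h)) (Finset.le_sup' v (Finset.mem_range.2 (by omega)))
  have hvn : |ghT A B C n| = v n * ((n:ℝ)+1) ^ (-p) := by
    rw [hv, mul_assoc, ← Real.rpow_add (by positivity), add_neg_cancel, Real.rpow_zero, mul_one]
  have hexp : -(1 + (C-A-B)/2) = -p := by rw [hp]
  rw [hvn, hexp]
  exact mul_le_mul_of_nonneg_right hKn (Real.rpow_nonneg (by positivity) _)

lemma summable_aux {p : ℝ} (hp : 1 < p) : Summable (fun n : ℕ => ((n:ℝ)+1) ^ (-p)) := by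
  have h := (Real.summable_one_div_nat_rpow (p := p)).2 hp
  have h2 := (summable_nat_add_iff 1).2 h
  refine h2.congr fun n => ?_
  push_cast
  rw [one_div, ← Real.rpow_neg (by positivity)]

lemma summable_ghT (A B C : ℝ) (hC : ∀ k : ℕ, C + k ≠ 0) (hd : 0 < C - A - B) :
    Summable (ghT A B C) := by
  obtain ⟨K, hK⟩ := ghT_bound A B C hC hd
  have hs : Summable (fun n : ℕ => K * ((n:ℝ)+1) ^ (-(1 + (C-A-B)/2))) :=
    (summable_aux (by linarith)).mul_left K
  exact hs.of_norm_bounded fun n => by rw [Real.norm_eq_abs]; exact hK n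

lemma tendsto_mul_ghT (A B C : ℝ) (hC : ∀ k : ℕ, C + k ≠ 0) (hd : 0 < C - A - B) :
    Tendsto (fun n : ℕ => (n:ℝ) * ghT A B C n) atTop (𝓝 0) := by
  obtain ⟨K, hK⟩ := ghT_bound A B C hC hd
  have hb : ∀ n : ℕ, ‖(n:ℝ) * ghT A B C n‖ ≤ K * ((n:ℝ)+1) ^ (-((C-A-B)/2)) := by
    intro n
    rw [Real.norm_eq_abs, abs_mul, Nat.abs_cast]
    have h1 : (n:ℝ) * |ghT A B C n| ≤ ((n:ℝ)+1) * (K * ((n:ℝ)+1) ^ (-(1 + (C-A-B)/2))) :=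
      mul_le_mul (by linarith) (hK n) (abs_nonneg _) (by positivity)
    refine le_trans h1 (le_of_eq ?_)
    have h2 : ((n:ℝ)+1) * ((n:ℝ)+1) ^ (-(1 + (C-A-B)/2)) = ((n:ℝ)+1) ^ (-((C-A-B)/2)) := by
      nth_rewrite 1 [← Real.rpow_one ((n:ℝ)+1)]
      rw [← Real.rpow_add (by positivity)]
      ring_nf
    rw [mul_comm ((n:ℝ)+1), mul_assoc, mul_comm (((n:ℝ)+1) ^ (-(1 + (C-A-B)/2))), h2]
  refine squeeze_zero_norm hb ?_
  have h3 : Tendsto (fun n : ℕ => ((n:ℝ)+1) ^ (-((C-A-B)/2))) atTop (𝓝 0) := by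
    apply (tendsto_rpow_neg_atTop (by linarith : 0 < (C-A-B)/2)).comp
    exact tendsto_atTop_add_const_right _ 1 tendsto_natCast_atTop_atTop
  simpa using h3.const_mul K

-- pointwise contiguous identity
lemma ghT_id (A B C : ℝ) (hC : ∀ k : ℕ, C + k ≠ 0) (n : ℕ) :
    C*(C-A-B) * ghT A B C n - (C-A)*(C-B) * ghT A B (C+1) n
      = C*(n:ℝ) * ghT A B C n - C*((n:ℝ)+1) * ghT A B C (n+1) := by
  have hC0 : C ≠ 0 := by have := hC 0; simpa using this
  have hCn : C + n ≠ 0 := hC n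
  have hpc : (ascPochhammer ℝ n).eval C ≠ 0 := poch_ne_zero hC n
  have hf : (n.factorial : ℝ) ≠ 0 := Nat.cast_ne_zero.2 n.factorial_ne_zero
  have hpc1 : (ascPochhammer ℝ n).eval (C+1) = (ascPochhammer ℝ n).eval C * (C + n) / C := by
    have h := ascPochhammer_succ_left (S := ℝ) n
    have h2 : (ascPochhammer ℝ (n+1)).eval C = C * (ascPochhammer ℝ n).eval (C+1) := by
      rw [h]
      simp [eval_mul, eval_comp]
    rw [ascPochhammer_succ_eval] at h2
    field_simp
    linarith [h2]
  simp only [ghT, ascPochhammer_succ_eval, Nat.factorial_succ, Nat.cast_mul, Nat.cast_add,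
    Nat.cast_one, hpc1]
  field_simp
  ring

lemma ghT_step (A B C : ℝ) (hC : ∀ k : ℕ, C + k ≠ 0) (hd : 0 < C - A - B) :
    C*(C-A-B) * ∑' n, ghT A B C n = (C-A)*(C-B) * ∑' n, ghT A B (C+1) n := by
  have hC1 : ∀ k : ℕ, (C+1) + k ≠ 0 := by
    intro k h
    have := hC (k+1)
    push_cast at this
    exact this (by linarith)
  have S1 : Summable (ghT A B C) := summable_ghT A B C hC hd
  have S2 : Summable (ghT A B (C+1)) := summable_ghT A B (C+1) hC1 (by linarith)
  have hsum : Summable (fun n : ℕ =>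
      C*(C-A-B) * ghT A B C n - (C-A)*(C-B) * ghT A B (C+1) n) :=
    (S1.mul_left _).sub (S2.mul_left _)
  have htsum : ∑' n, (C*(C-A-B) * ghT A B C n - (C-A)*(C-B) * ghT A B (C+1) n)
      = C*(C-A-B) * ∑' n, ghT A B C n - (C-A)*(C-B) * ∑' n, ghT A B (C+1) n := by
    rw [Summable.tsum_sub (S1.mul_left _) (S2.mul_left _), tsum_mul_left, tsum_mul_left]
  have hzero : ∑' n, (C*(C-A-B) * ghT A B C n - (C-A)*(C-B) * ghT A B (C+1) n) = 0 := by
    have hre : ∀ n : ℕ, C*(C-A-B) * ghT A B C n - (C-A)*(C-B) * ghT A B (C+1) n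
        = (fun m : ℕ => C*(m:ℝ) * ghT A B C m) n - (fun m : ℕ => C*(m:ℝ) * ghT A B C m) (n+1) := by
      intro n
      have := ghT_id A B C hC n
      push_cast
      push_cast at this
      linarith
    have hsum' := hsum.congr hre
    have hpart : Tendsto (fun N => ∑ n ∈ Finset.range N,
        ((fun m : ℕ => C*(m:ℝ) * ghT A B C m) n - (fun m : ℕ => C*(m:ℝ) * ghT A B C m) (n+1)))
        atTop (𝓝 0) := by
      have heq : ∀ N, ∑ n ∈ Finset.range N,
          ((fun m : ℕ => C*(m:ℝ) * ghT A B C m) n - (fun m : ℕ => C*(m:ℝ) * ghT A B C m) (n+1))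
          = - (C*(N:ℝ) * ghT A B C N) := by
        intro N
        rw [Finset.sum_range_sub' (f := fun m : ℕ => C*(m:ℝ) * ghT A B C m)]
        simp
      simp only [heq]
      have := (tendsto_mul_ghT A B C hC hd).const_mul C
      have h2 := this.neg
      simpa [mul_assoc] using h2
    have hps := hsum'.hasSum.tendsto_sum_nat
    have := tendsto_nhds_unique hps hpart
    rw [tsum_congr hre]
    exact this
  rw [htsum] at hzero
  linarith

lemma ghT_iter (A B C : ℝ) (hC : ∀ k : ℕ, C + k ≠ 0) (hd : 0 < C - A - B) (m : ℕ) :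
    (ascPochhammer ℝ m).eval C * (ascPochhammer ℝ m).eval (C-A-B) * ∑' n, ghT A B C n
      = (ascPochhammer ℝ m).eval (C-A) * (ascPochhammer ℝ m).eval (C-B)
        * ∑' n, ghT A B (C+(m:ℝ)) n := by
  induction m with
  | zero => simp
  | succ m ih =>
    have hCm : ∀ k : ℕ, (C+(m:ℝ)) + k ≠ 0 := by
      intro k h
      exact hC (m+k) (by push_cast; linarith)
    have hdm : 0 < (C+(m:ℝ)) - A - B := by
      have : (0:ℝ) ≤ m := Nat.cast_nonneg m
      linarith
    have hstep := ghT_step A B (C+(m:ℝ)) hCm hdm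
    have hcast : C + ((m+1:ℕ):ℝ) = C + (m:ℝ) + 1 := by push_cast; ring
    rw [ascPochhammer_succ_eval, ascPochhammer_succ_eval, ascPochhammer_succ_eval,
      ascPochhammer_succ_eval, hcast]
    linear_combination ((C+(m:ℝ))*(C-A-B+m)) * ih
      + ((ascPochhammer ℝ m).eval (C-A) * (ascPochhammer ℝ m).eval (C-B)) * hstep

lemma poch_nonneg {x : ℝ} (hx : 0 ≤ x) (n : ℕ) : 0 ≤ (ascPochhammer ℝ n).eval x := by
  rw [poch_prod]
  exact Finset.prod_nonneg fun i _ => by positivity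

lemma poch_pos' {x : ℝ} (hx : 0 < x) (n : ℕ) : 0 < (ascPochhammer ℝ n).eval x := by
  rw [poch_prod]
  exact Finset.prod_pos fun i _ => by positivity

lemma ghT_abs_le (A B C x : ℝ) (hx : 0 < x) (hxC : x ≤ C) (n : ℕ) :
    |ghT A B C n| ≤ ghT |A| |B| x n := by
  have hf : (0:ℝ) < (n.factorial : ℝ) := by positivity
  rw [ghT, ghT, abs_div, abs_mul, abs_mul]
  have hnum : |(ascPochhammer ℝ n).eval A| * |(ascPochhammer ℝ n).eval B|
      ≤ (ascPochhammer ℝ n).eval |A| * (ascPochhammer ℝ n).eval |B| :=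
    mul_le_mul (poch_abs_le A n) (poch_abs_le B n) (abs_nonneg _)
      (le_trans (abs_nonneg _) (poch_abs_le A n))
  have hC0 : 0 < (ascPochhammer ℝ n).eval C := poch_pos' (lt_of_lt_of_le hx hxC) n
  have hx0 : 0 < (ascPochhammer ℝ n).eval x := poch_pos' hx n
  rw [abs_of_pos hC0, Nat.abs_cast]
  have hnn : 0 ≤ (ascPochhammer ℝ n).eval |A| * (ascPochhammer ℝ n).eval |B| :=
    mul_nonneg (poch_nonneg (abs_nonneg A) n) (poch_nonneg (abs_nonneg B) n)
  exact div_le_div₀ hnn hnum (by positivity)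
    (mul_le_mul_of_nonneg_right (poch_mono hx hxC n) hf.le)

lemma ghT_tendsto_one (A B C : ℝ) (hC : ∀ k : ℕ, C + k ≠ 0) :
    Tendsto (fun m : ℕ => ∑' n, ghT A B (C+(m:ℝ)) n) atTop (𝓝 1) := by
  obtain ⟨m1, hm1⟩ : ∃ m1 : ℕ, |A| + |B| + 1 ≤ C + (m1:ℝ) := by
    obtain ⟨m1, h⟩ := exists_nat_ge (|A| + |B| + 1 - C)
    exact ⟨m1, by linarith⟩
  have hm1pos : 0 < C + (m1:ℝ) := by
    have := abs_nonneg A; have := abs_nonneg B; linarith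
  have hCm : ∀ m : ℕ, ∀ k : ℕ, (C+(m:ℝ)) + k ≠ 0 := by
    intro m k h
    exact hC (m+k) (by push_cast; linarith)
  have hbsum : Summable (ghT |A| |B| (C+(m1:ℝ))) := by
    refine summable_ghT _ _ _ (hCm m1) ?_
    linarith
  have key : Tendsto (fun m : ℕ => ∑' n, ghT A B (C+(m:ℝ)) n) atTop
      (𝓝 (∑' n : ℕ, if n = 0 then (1:ℝ) else 0)) := by
    refine tendsto_tsum_of_dominated_convergence hbsum ?_ ?_
    · intro n
      rcases Nat.eq_zero_or_pos n with rfl | hn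
      · simp only [if_pos rfl]
        have : ∀ m : ℕ, ghT A B (C+(m:ℝ)) 0 = 1 := by intro m; simp [ghT]
        simp only [this]
        exact tendsto_const_nhds
      · simp only [if_neg hn.ne']
        have hcn : (0:ℝ) < ((ascPochhammer ℝ n).eval |A| * (ascPochhammer ℝ n).eval |B|) + 1 := by
          have := mul_nonneg (poch_nonneg (abs_nonneg A) n) (poch_nonneg (abs_nonneg B) n)
          linarith
        refine squeeze_zero_norm' (a := fun m : ℕ => ((ascPochhammer ℝ n).eval |A| * (ascPochhammer ℝ n).eval |B| + 1) / (C+(m:ℝ))) ?_ ?_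
        · filter_upwards [eventually_ge_atTop m1] with m hm
          have hmge : C + (m1:ℝ) ≤ C + (m:ℝ) := by
            have : (m1:ℝ) ≤ m := Nat.cast_le.2 hm
            linarith
          have h1 : |ghT A B (C+(m:ℝ)) n| ≤ ghT |A| |B| (C+(m:ℝ)) n :=
            ghT_abs_le A B _ (C+(m:ℝ)) (by linarith) le_rfl n
          have h2 : ghT |A| |B| (C+(m:ℝ)) n
              ≤ ((ascPochhammer ℝ n).eval |A| * (ascPochhammer ℝ n).eval |B|) / (C+(m:ℝ)) := by
            rw [ghT]
            have hnn : 0 ≤ (ascPochhammer ℝ n).eval |A| * (ascPochhammer ℝ n).eval |B| :=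
              mul_nonneg (poch_nonneg (abs_nonneg A) n) (poch_nonneg (abs_nonneg B) n)
            have habA := abs_nonneg A
            have habB := abs_nonneg B
            refine div_le_div₀ hnn le_rfl (by linarith) ?_
            have hp1 : C + (m:ℝ) ≤ (ascPochhammer ℝ n).eval (C+(m:ℝ)) :=
              poch_ge_self (by linarith) hn.ne'
            have hfa : (1:ℝ) ≤ (n.factorial : ℝ) := by
              exact_mod_cast Nat.one_le_iff_ne_zero.2 n.factorial_ne_zero
            calc C + (m:ℝ) ≤ (ascPochhammer ℝ n).eval (C+(m:ℝ)) := hp1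
            _ = (ascPochhammer ℝ n).eval (C+(m:ℝ)) * 1 := (mul_one _).symm
            _ ≤ (ascPochhammer ℝ n).eval (C+(m:ℝ)) * (n.factorial : ℝ) := by
                have := poch_pos' (show (0:ℝ) < C+(m:ℝ) by linarith) n
                nlinarith
          rw [Real.norm_eq_abs]
          refine le_trans h1 (le_trans h2 ?_)
          refine div_le_div₀ hcn.le (by linarith) (by linarith) le_rfl
        · refine Tendsto.div_atTop tendsto_const_nhds ?_
          exact tendsto_atTop_add_const_left _ C tendsto_natCast_atTop_atTop
    · filter_upwards [eventually_ge_atTop m1] with m hm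
      intro n
      have hmge : C + (m1:ℝ) ≤ C + (m:ℝ) := by
        have : (m1:ℝ) ≤ m := Nat.cast_le.2 hm
        linarith
      rw [Real.norm_eq_abs]
      exact ghT_abs_le A B _ _ hm1pos hmge n
  have : ∑' n : ℕ, (if n = 0 then (1:ℝ) else 0) = 1 := by
    rw [tsum_eq_single 0 (fun n hn => if_neg hn)]
    simp
  rwa [this] at key

end GaussAux

/-- Gauss's summation theorem: for real `A`, `B`, `C` with `C - A - B > 0` and `C`
not a nonpositive integer, the hypergeometric series converges at `t = 1` with sum
`Γ(C)Γ(C-A-B)/(Γ(C-A)Γ(C-B))`. -/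
theorem gauss_summation (A B C : ℝ) (h : 0 < C - A - B)
    (hC : ∀ n : ℕ, C ≠ -(n : ℝ)) :
    HasSum
      (fun n : ℕ =>
        (ascPochhammer ℝ n).eval A * (ascPochhammer ℝ n).eval B /
          ((ascPochhammer ℝ n).eval C * (n.factorial : ℝ)))
      (Real.Gamma C * Real.Gamma (C - A - B) /
        (Real.Gamma (C - A) * Real.Gamma (C - B))) := by
  have hC0 : ∀ k : ℕ, C + (k:ℝ) ≠ 0 := by
    intro k hk
    exact hC k (by linarith)
  have hsum : Summable (ghT A B C) := summable_ghT A B C hC0 h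
  have hd0 : ∀ k : ℕ, (C-A-B) + (k:ℝ) ≠ 0 := by
    intro k
    have : (0:ℝ) ≤ k := Nat.cast_nonneg k
    intro hk
    linarith
  have hFeq : HasSum (ghT A B C) (Real.Gamma C * Real.Gamma (C - A - B) /
      (Real.Gamma (C - A) * Real.Gamma (C - B))) → HasSum
      (fun n : ℕ =>
        (ascPochhammer ℝ n).eval A * (ascPochhammer ℝ n).eval B /
          ((ascPochhammer ℝ n).eval C * (n.factorial : ℝ)))
      (Real.Gamma C * Real.Gamma (C - A - B) /
        (Real.Gamma (C - A) * Real.Gamma (C - B))) := fun hh => hh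
  apply hFeq
  rw [hsum.hasSum_iff]
  by_cases hA : ∀ k : ℕ, C - A + (k:ℝ) ≠ 0
  · by_cases hB : ∀ k : ℕ, C - B + (k:ℝ) ≠ 0
    · -- main case
      have hGA : Real.Gamma (C-A) ≠ 0 := Real.Gamma_ne_zero fun m hm => hA m (by rw [hm]; ring)
      have hGB : Real.Gamma (C-B) ≠ 0 := Real.Gamma_ne_zero fun m hm => hB m (by rw [hm]; ring)
      have hRF : ∀ m : ℕ,
          ((ascPochhammer ℝ m).eval (C-A) * (ascPochhammer ℝ m).eval (C-B)
            / ((ascPochhammer ℝ m).eval C * (ascPochhammer ℝ m).eval (C-A-B)))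
            * ∑' n, ghT A B (C+(m:ℝ)) n = ∑' n, ghT A B C n := by
        intro m
        have h1 : (ascPochhammer ℝ m).eval C ≠ 0 := poch_ne_zero hC0 m
        have h2 : (ascPochhammer ℝ m).eval (C-A-B) ≠ 0 := poch_ne_zero hd0 m
        rw [div_mul_eq_mul_div, div_eq_iff (mul_ne_zero h1 h2)]
        linear_combination -ghT_iter A B C hC0 h m
      have heq : ∀ᶠ m : ℕ in atTop,
          (Real.GammaSeq C m * Real.GammaSeq (C-A-B) m)
            / (Real.GammaSeq (C-A) m * Real.GammaSeq (C-B) m)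
          = (ascPochhammer ℝ (m+1)).eval (C-A) * (ascPochhammer ℝ (m+1)).eval (C-B)
            / ((ascPochhammer ℝ (m+1)).eval C * (ascPochhammer ℝ (m+1)).eval (C-A-B)) := by
        filter_upwards [eventually_ge_atTop 1] with m hm
        have hm0 : (0:ℝ) < (m:ℝ) := by exact_mod_cast hm
        have hprod : ∀ x : ℝ, Real.GammaSeq x m
            = (m:ℝ) ^ x * (m.factorial : ℝ) / (ascPochhammer ℝ (m+1)).eval x := by
          intro x
          rw [Real.GammaSeq, poch_prod]
        have h1 : (ascPochhammer ℝ (m+1)).eval C ≠ 0 := poch_ne_zero hC0 (m+1)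
        have h2 : (ascPochhammer ℝ (m+1)).eval (C-A-B) ≠ 0 := poch_ne_zero hd0 (m+1)
        have h3 : (ascPochhammer ℝ (m+1)).eval (C-A) ≠ 0 := poch_ne_zero hA (m+1)
        have h4 : (ascPochhammer ℝ (m+1)).eval (C-B) ≠ 0 := poch_ne_zero hB (m+1)
        have hf : (m.factorial : ℝ) ≠ 0 := Nat.cast_ne_zero.2 m.factorial_ne_zero
        have hp1 : (0:ℝ) < (m:ℝ) ^ (C-A) := Real.rpow_pos_of_pos hm0 _
        have hp2 : (0:ℝ) < (m:ℝ) ^ (C-B) := Real.rpow_pos_of_pos hm0 _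
        have hpow : (m:ℝ) ^ C * (m:ℝ) ^ (C-A-B) = (m:ℝ) ^ (C-A) * (m:ℝ) ^ (C-B) := by
          rw [← Real.rpow_add hm0, ← Real.rpow_add hm0]
          congr 1
          ring
        rw [hprod, hprod, hprod, hprod]
        rw [div_mul_div_comm, div_mul_div_comm, div_div_div_eq]
        rw [div_eq_div_iff
          (mul_ne_zero (mul_ne_zero h1 h2) (by positivity)) (mul_ne_zero h1 h2)]
        linear_combination ((ascPochhammer ℝ (m+1)).eval (C-A) * (ascPochhammer ℝ (m+1)).eval (C-B)
          * (ascPochhammer ℝ (m+1)).eval C * (ascPochhammer ℝ (m+1)).eval (C-A-B)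
          * ((m.factorial:ℝ))^2) * hpow
      have hRlim : Tendsto (fun m : ℕ =>
          (ascPochhammer ℝ (m+1)).eval (C-A) * (ascPochhammer ℝ (m+1)).eval (C-B)
            / ((ascPochhammer ℝ (m+1)).eval C * (ascPochhammer ℝ (m+1)).eval (C-A-B)))
          atTop (𝓝 (Real.Gamma C * Real.Gamma (C-A-B)
            / (Real.Gamma (C-A) * Real.Gamma (C-B)))) := by
        refine Tendsto.congr' heq ?_
        exact ((Real.GammaSeq_tendsto_Gamma C).mul
          (Real.GammaSeq_tendsto_Gamma (C-A-B))).div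
          ((Real.GammaSeq_tendsto_Gamma (C-A)).mul
            (Real.GammaSeq_tendsto_Gamma (C-B))) (mul_ne_zero hGA hGB)
      have hFshift : Tendsto (fun m : ℕ => ∑' n, ghT A B (C+((m+1:ℕ):ℝ)) n) atTop (𝓝 1) :=
        (ghT_tendsto_one A B C hC0).comp (tendsto_add_atTop_nat 1)
      have hconst : (fun m : ℕ =>
          ((ascPochhammer ℝ (m+1)).eval (C-A) * (ascPochhammer ℝ (m+1)).eval (C-B)
            / ((ascPochhammer ℝ (m+1)).eval C * (ascPochhammer ℝ (m+1)).eval (C-A-B)))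
            * ∑' n, ghT A B (C+((m+1:ℕ):ℝ)) n) = fun _ => ∑' n, ghT A B C n := by
        funext m
        exact hRF (m+1)
      have hlim2 := hRlim.mul hFshift
      rw [mul_one] at hlim2
      rw [hconst] at hlim2
      exact tendsto_nhds_unique tendsto_const_nhds hlim2
    · -- edge case in B
      push_neg at hB
      obtain ⟨k, hk⟩ := hB
      have hCB : C - B = -(k:ℝ) := by linarith
      rw [hCB, Real.Gamma_neg_nat_eq_zero, mul_zero, div_zero]
      have hiter := ghT_iter A B C hC0 h (k+1)
      have hz : (ascPochhammer ℝ (k+1)).eval (C-B) = 0 := by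
        rw [poch_prod]
        exact Finset.prod_eq_zero (Finset.mem_range.2 (Nat.lt_succ_self k)) hk
      rw [hz] at hiter
      have h1 : (ascPochhammer ℝ (k+1)).eval C ≠ 0 := poch_ne_zero hC0 (k+1)
      have h2 : (ascPochhammer ℝ (k+1)).eval (C-A-B) ≠ 0 := poch_ne_zero hd0 (k+1)
      rw [mul_zero, zero_mul] at hiter
      exact (mul_eq_zero.1 hiter).resolve_left (mul_ne_zero h1 h2)
  · -- edge case in A
    push_neg at hA
    obtain ⟨k, hk⟩ := hA
    have hCA : C - A = -(k:ℝ) := by linarith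
    rw [hCA, Real.Gamma_neg_nat_eq_zero, zero_mul, div_zero]
    have hiter := ghT_iter A B C hC0 h (k+1)
    have hz : (ascPochhammer ℝ (k+1)).eval (C-A) = 0 := by
      rw [poch_prod]
      exact Finset.prod_eq_zero (Finset.mem_range.2 (Nat.lt_succ_self k)) hk
    rw [hz, zero_mul, zero_mul] at hiter
    have h1 : (ascPochhammer ℝ (k+1)).eval C ≠ 0 := poch_ne_zero hC0 (k+1)
    have h2 : (ascPochhammer ℝ (k+1)).eval (C-A-B) ≠ 0 := poch_ne_zero hd0 (k+1)
    have := mul_eq_zero.1 hiter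
    rcases this with h' | h'
    · exact absurd h' (mul_ne_zero h1 h2)
    · exact h'
end

section
/- For real numbers A, B, C with C not a nonpositive integer, the function y(t) = Σ_{n≥0} (A)_n (B)_n / ((C)_n n!) t^n satisfies the hypergeometric differential equation t(1-t)y'' + (C - (A+B+1)t)y' - AB·y = 0 on the open unit disc. -/
open Polynomial Filter Metric
open scoped Topology

lemma tendsto_add_div_add (a b : ℝ) :
    Tendsto (fun n : ℕ => ((n : ℝ) + a) / ((n : ℝ) + b)) atTop (𝓝 1) := by
  have hb : Tendsto (fun n : ℕ => (n : ℝ) + b) atTop atTop :=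
    tendsto_atTop_add_const_right _ b tendsto_natCast_atTop_atTop
  have h0 : Tendsto (fun n : ℕ => (a - b) / ((n : ℝ) + b)) atTop (𝓝 0) :=
    Tendsto.div_atTop tendsto_const_nhds hb
  have h1 : Tendsto (fun n : ℕ => 1 + (a - b) / ((n : ℝ) + b)) atTop (𝓝 1) := by
    simpa using tendsto_const_nhds.add h0
  refine h1.congr' ?_
  filter_upwards [hb.eventually_gt_atTop 0] with n hn
  field_simp
  ring

lemma hasDerivAt_psum (c : ℕ → ℂ)
    (hs : ∀ r : ℝ, 0 < r → r < 1 → Summable (fun n => ‖c n‖ * ((n : ℝ) + 1) * r ^ n))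
    {t : ℂ} (ht : ‖t‖ < 1) :
    HasDerivAt (fun s : ℂ => ∑' n : ℕ, c n * s ^ n)
      (∑' n : ℕ, ((n : ℂ) + 1) * c (n + 1) * t ^ n) t := by
  set r : ℝ := (‖t‖ + 1) / 2 with hrdef
  have h0t : (0:ℝ) ≤ ‖t‖ := norm_nonneg t
  have hr0 : 0 < r := by rw [hrdef]; linarith
  have htr : ‖t‖ < r := by rw [hrdef]; linarith
  have hr1 : r < 1 := by rw [hrdef]; linarith
  have hsum := hs r hr0 hr1
  have hu : Summable (fun n => r⁻¹ * (‖c n‖ * ((n : ℝ) + 1) * r ^ n)) := hsum.mul_left _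
  have hg : ∀ (n : ℕ) (z : ℂ), z ∈ ball (0 : ℂ) r →
      HasDerivAt (fun s : ℂ => c n * s ^ n) (c n * ((n : ℂ) * z ^ (n - 1))) z :=
    fun n z _ => (hasDerivAt_pow n z).const_mul (c n)
  have hbound : ∀ (n : ℕ) (z : ℂ), z ∈ ball (0 : ℂ) r →
      ‖c n * ((n : ℂ) * z ^ (n - 1))‖ ≤ r⁻¹ * (‖c n‖ * ((n : ℝ) + 1) * r ^ n) := by
    intro n z hz
    have hz' : ‖z‖ ≤ r := by
      have := mem_ball_iff_norm.1 hz
      simpa using this.le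
    rw [norm_mul, norm_mul, norm_pow, Complex.norm_natCast]
    cases n with
    | zero => simp; positivity
    | succ m =>
      have hp : ‖z‖ ^ m ≤ r ^ m := pow_le_pow_left₀ (norm_nonneg z) hz' m
      push_cast
      rw [pow_succ]
      have heq : r⁻¹ * (‖c (m+1)‖ * ((m:ℝ)+1+1) * (r^m * r)) = ‖c (m+1)‖ * (((m:ℝ)+2) * r^m) := by
        field_simp; ring
      rw [heq]
      have h2 : ‖c (m+1)‖ * (((m:ℝ)+1) * ‖z‖^m) ≤ ‖c (m+1)‖ * (((m:ℝ)+1) * r^m) := by gcongr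
      refine h2.trans ?_
      nlinarith [pow_nonneg hr0.le m, norm_nonneg (c (m+1))]
  have hg0 : Summable fun n => c n * t ^ n := by
    refine Summable.of_norm (Summable.of_nonneg_of_le (fun n => norm_nonneg _) (fun n => ?_) hsum)
    rw [norm_mul, norm_pow]
    have h1 : ‖t‖ ^ n ≤ r ^ n := pow_le_pow_left₀ h0t htr.le n
    nlinarith [norm_nonneg (c n), pow_nonneg hr0.le n, pow_nonneg h0t n, Nat.cast_nonneg (α := ℝ) n, mul_nonneg (norm_nonneg (c n)) (pow_nonneg hr0.le n)]
  have ht' : t ∈ ball (0 : ℂ) r := by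
    rw [mem_ball_iff_norm]; simpa using htr
  have H := hasDerivAt_tsum_of_isPreconnected hu isOpen_ball
    (convex_ball (0 : ℂ) r).isPreconnected hg hbound ht' hg0 ht'
  convert H using 1
  · rfl
  · rfl
  have hsum' : Summable fun n => c n * ((n : ℂ) * t ^ (n - 1)) :=
    Summable.of_norm (Summable.of_nonneg_of_le (fun n => norm_nonneg _)
      (fun n => hbound n t ht') hu)
  rw [Summable.tsum_eq_zero_add hsum']
  simp only [Nat.cast_zero, pow_zero, zero_mul, mul_zero, zero_add]
  refine tsum_congr fun n => ?_
  simp only [Nat.add_sub_cancel]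
  push_cast
  ring

theorem key (A B C : ℝ) (c : ℕ → ℂ)
    (hCn : ∀ n : ℕ, (n : ℝ) + C ≠ 0)
    (hrec : ∀ n : ℕ, c (n + 1) * (((n : ℂ) + 1) * ((C : ℂ) + (n : ℂ)))
      = c n * (((A : ℂ) + (n : ℂ)) * ((B : ℂ) + (n : ℂ)))) :
    ∀ t : ℂ, ‖t‖ < 1 →
      t * (1 - t) * iteratedDeriv 2 (fun s : ℂ => ∑' n : ℕ, c n * s ^ n) t +
        ((C : ℂ) - ((A : ℂ) + (B : ℂ) + 1) * t) *
          deriv (fun s : ℂ => ∑' n : ℕ, c n * s ^ n) t -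
        (A : ℂ) * (B : ℂ) * (∑' n : ℕ, c n * t ^ n) = 0 := by
  -- norm ratio
  have hnr : ∀ n : ℕ, ‖c (n + 1)‖
      = ‖c n‖ * (|(n : ℝ) + A| * |(n : ℝ) + B|) / (((n : ℝ) + 1) * |(n : ℝ) + C|) := by
    intro n
    have h := congrArg (fun z : ℂ => ‖z‖) (hrec n)
    simp only [norm_mul] at h
    have e1 : ‖(n : ℂ) + 1‖ = (n : ℝ) + 1 := by
      rw [show ((n : ℂ) + 1) = (((n : ℝ) + 1 : ℝ) : ℂ) by push_cast; ring,
        Complex.norm_real, Real.norm_eq_abs, abs_of_nonneg (by positivity)]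
    have e2 : ‖(C : ℂ) + (n : ℂ)‖ = |(n : ℝ) + C| := by
      rw [show ((C : ℂ) + (n : ℂ)) = (((n : ℝ) + C : ℝ) : ℂ) by push_cast; ring,
        Complex.norm_real, Real.norm_eq_abs]
    have e3 : ‖(A : ℂ) + (n : ℂ)‖ = |(n : ℝ) + A| := by
      rw [show ((A : ℂ) + (n : ℂ)) = (((n : ℝ) + A : ℝ) : ℂ) by push_cast; ring,
        Complex.norm_real, Real.norm_eq_abs]
    have e4 : ‖(B : ℂ) + (n : ℂ)‖ = |(n : ℝ) + B| := by
      rw [show ((B : ℂ) + (n : ℂ)) = (((n : ℝ) + B : ℝ) : ℂ) by push_cast; ring,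
        Complex.norm_real, Real.norm_eq_abs]
    rw [e1, e2, e3, e4] at h
    rw [eq_div_iff (mul_ne_zero (by positivity) (abs_ne_zero.2 (hCn n)))]
    linarith [h]
  -- master summability
  have master : ∀ (k : ℕ) (r : ℝ), 0 < r → r < 1 →
      Summable (fun n => ‖c n‖ * ((n : ℝ) + 1) ^ k * r ^ n) := by
    intro k r hr0 hr1
    set w : ℕ → ℝ := fun n =>
      (|(n : ℝ) + A| * |(n : ℝ) + B| * ((n : ℝ) + 2) ^ k * r)
        / (((n : ℝ) + 1) * |(n : ℝ) + C| * ((n : ℝ) + 1) ^ k) with hwdef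
    have hlim : Filter.Tendsto w Filter.atTop (𝓝 r) := by
      have hw : w = fun n : ℕ => r * |((n : ℝ) + A) / ((n : ℝ) + 1)|
          * |((n : ℝ) + B) / ((n : ℝ) + C)| * (((n : ℝ) + 2) / ((n : ℝ) + 1)) ^ k := by
        funext n
        have h1 : ((n : ℝ) + 1) ≠ 0 := by positivity
        have h2 : |(n : ℝ) + C| ≠ 0 := abs_ne_zero.2 (hCn n)
        rw [hwdef]
        simp only [abs_div, div_pow, abs_of_nonneg (show (0:ℝ) ≤ (n : ℝ) + 1 by positivity)]
        field_simp
      rw [hw]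
      have := ((tendsto_const_nhds (x := r)).mul (tendsto_add_div_add A 1).abs).mul
        ((tendsto_add_div_add B C).abs) |>.mul ((tendsto_add_div_add 2 1).pow k)
      simpa using this
    have hev : ∀ᶠ n in Filter.atTop, w n ≤ (1 + r) / 2 :=
      (hlim.eventually (gt_mem_nhds (show r < (1 + r) / 2 by linarith))).mono
        fun n h => le_of_lt h
    refine summable_of_ratio_norm_eventually_le (r := (1 + r) / 2) (by linarith) ?_
    filter_upwards [hev] with n hn
    have hfn : (0:ℝ) ≤ ‖c n‖ * ((n : ℝ) + 1) ^ k * r ^ n := by positivity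
    have hwn : (0:ℝ) ≤ w n := by
      rw [hwdef]; positivity
    have hratio : ‖c (n + 1)‖ * (((n + 1 : ℕ) : ℝ) + 1) ^ k * r ^ (n + 1)
        = w n * (‖c n‖ * ((n : ℝ) + 1) ^ k * r ^ n) := by
      rw [hnr n, hwdef]
      have h1 : ((n : ℝ) + 1) ≠ 0 := by positivity
      have h2 : |(n : ℝ) + C| ≠ 0 := abs_ne_zero.2 (hCn n)
      push_cast
      field_simp
      ring
    rw [Real.norm_of_nonneg (by positivity), Real.norm_of_nonneg hfn, hratio]
    exact mul_le_mul_of_nonneg_right hn hfn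
  -- shifted master
  have master' : ∀ (j k : ℕ) (r : ℝ), 0 < r → r < 1 →
      Summable (fun n => ‖c (n + j)‖ * (((n + j : ℕ) : ℝ) + 1) ^ k * r ^ n) := by
    intro j k r hr0 hr1
    have h := (summable_nat_add_iff j).2 (master k r hr0 hr1)
    refine (summable_mul_left_iff (pow_ne_zero j hr0.ne')).1 (h.congr fun n => ?_)
    simp only [pow_add]
    ring
  -- summability hypotheses for termwise differentiation
  have hs_c : ∀ r : ℝ, 0 < r → r < 1 → Summable (fun n => ‖c n‖ * ((n : ℝ) + 1) * r ^ n) :=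
    fun r hr0 hr1 => (master 1 r hr0 hr1).congr fun n => by rw [pow_one]
  set d1 : ℕ → ℂ := fun n => ((n : ℂ) + 1) * c (n + 1) with hd1def
  have hnd1 : ∀ n : ℕ, ‖d1 n‖ = ((n : ℝ) + 1) * ‖c (n + 1)‖ := by
    intro n
    rw [hd1def]
    simp only [norm_mul]
    congr 1
    rw [show ((n : ℂ) + 1) = (((n : ℝ) + 1 : ℝ) : ℂ) by push_cast; ring,
      Complex.norm_real, Real.norm_eq_abs, abs_of_nonneg (by positivity)]
  have hs_d1 : ∀ r : ℝ, 0 < r → r < 1 → Summable (fun n => ‖d1 n‖ * ((n : ℝ) + 1) * r ^ n) := by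
    intro r hr0 hr1
    refine Summable.of_nonneg_of_le (fun n => by positivity) (fun n => ?_)
      (master' 1 2 r hr0 hr1)
    rw [hnd1 n]
    push_cast
    nlinarith [norm_nonneg (c (n + 1)), pow_nonneg hr0.le n, Nat.cast_nonneg (α := ℝ) n,
      mul_nonneg (norm_nonneg (c (n + 1))) (pow_nonneg hr0.le n)]
  intro t ht
  have htball : t ∈ Metric.ball (0 : ℂ) 1 := by rw [Metric.mem_ball, dist_zero_right]; exact ht
  -- derivatives
  have hderiv : ∀ s : ℂ, ‖s‖ < 1 →
      HasDerivAt (fun s : ℂ => ∑' n : ℕ, c n * s ^ n) (∑' n : ℕ, d1 n * s ^ n) s := by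
    intro s hslt
    have h := hasDerivAt_psum c hs_c hslt
    convert h using 1
  have hderiv2 : HasDerivAt (fun s : ℂ => ∑' n : ℕ, d1 n * s ^ n)
      (∑' n : ℕ, ((n : ℂ) + 1) * d1 (n + 1) * t ^ n) t := hasDerivAt_psum d1 hs_d1 ht
  have hD1 : deriv (fun s : ℂ => ∑' n : ℕ, c n * s ^ n) t = ∑' n : ℕ, d1 n * t ^ n :=
    (hderiv t ht).deriv
  have hEqOn : ∀ s ∈ Metric.ball (0 : ℂ) 1,
      deriv (fun s : ℂ => ∑' n : ℕ, c n * s ^ n) s = ∑' n : ℕ, d1 n * s ^ n := by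
    intro s hsb
    exact (hderiv s (by rwa [Metric.mem_ball, dist_zero_right] at hsb)).deriv
  have hD2 : iteratedDeriv 2 (fun s : ℂ => ∑' n : ℕ, c n * s ^ n) t
      = ∑' n : ℕ, ((n : ℂ) + 1) * d1 (n + 1) * t ^ n := by
    rw [show (2 : ℕ) = 1 + 1 from rfl, iteratedDeriv_succ, iteratedDeriv_one]
    have hev : deriv (fun s : ℂ => ∑' n : ℕ, c n * s ^ n)
        =ᶠ[𝓝 t] fun s : ℂ => ∑' n : ℕ, d1 n * s ^ n :=
      Filter.eventually_of_mem (Metric.isOpen_ball.mem_nhds htball) hEqOn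
    rw [hev.deriv_eq]
    exact hderiv2.deriv
  -- summability of the three series at t
  set r : ℝ := (‖t‖ + 1) / 2 with hrdef
  have h0t : (0:ℝ) ≤ ‖t‖ := norm_nonneg t
  have hr0 : 0 < r := by rw [hrdef]; linarith
  have htr : ‖t‖ < r := by rw [hrdef]; linarith
  have hr1 : r < 1 := by rw [hrdef]; linarith
  have hnormt : ∀ n : ℕ, ‖t‖ ^ n ≤ r ^ n := fun n => pow_le_pow_left₀ h0t htr.le n
  have hsum0 : Summable (fun n : ℕ => c n * t ^ n) := by
    refine Summable.of_norm (Summable.of_nonneg_of_le (fun n => norm_nonneg _) (fun n => ?_)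
      ((master 1 r hr0 hr1).congr fun n => by rw [pow_one]))
    rw [norm_mul, norm_pow]
    calc ‖c n‖ * ‖t‖ ^ n ≤ ‖c n‖ * r ^ n := by gcongr
      _ ≤ ‖c n‖ * ((n : ℝ) + 1) * r ^ n := by
          nlinarith [norm_nonneg (c n), pow_nonneg hr0.le n, Nat.cast_nonneg (α := ℝ) n,
            mul_nonneg (norm_nonneg (c n)) (pow_nonneg hr0.le n)]
  have hsum1 : Summable (fun n : ℕ => d1 n * t ^ n) := by
    refine Summable.of_norm (Summable.of_nonneg_of_le (fun n => norm_nonneg _) (fun n => ?_)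
      (master' 1 2 r hr0 hr1))
    rw [norm_mul, norm_pow, hnd1 n]
    push_cast
    calc ((n : ℝ) + 1) * ‖c (n + 1)‖ * ‖t‖ ^ n ≤ ((n : ℝ) + 1) * ‖c (n + 1)‖ * r ^ n := by
          gcongr
      _ ≤ ((n : ℝ) + 2) ^ 2 * ‖c (n + 1)‖ * r ^ n := by
          gcongr
          nlinarith [Nat.cast_nonneg (α := ℝ) n]
      _ = ‖c (n + 1)‖ * ((n : ℝ) + 1 + 1) ^ 2 * r ^ n := by ring
  have hsum2 : Summable (fun n : ℕ => ((n : ℂ) + 1) * d1 (n + 1) * t ^ n) := by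
    refine Summable.of_norm (Summable.of_nonneg_of_le (fun n => norm_nonneg _) (fun n => ?_)
      (master' 2 2 r hr0 hr1))
    rw [norm_mul, norm_mul, norm_pow, hnd1 (n + 1)]
    have e1 : ‖(n : ℂ) + 1‖ = (n : ℝ) + 1 := by
      rw [show ((n : ℂ) + 1) = (((n : ℝ) + 1 : ℝ) : ℂ) by push_cast; ring,
        Complex.norm_real, Real.norm_eq_abs, abs_of_nonneg (by positivity)]
    rw [e1]
    push_cast
    calc ((n : ℝ) + 1) * (((n : ℝ) + 1 + 1) * ‖c (n + 1 + 1)‖) * ‖t‖ ^ n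
        ≤ ((n : ℝ) + 1) * (((n : ℝ) + 1 + 1) * ‖c (n + 1 + 1)‖) * r ^ n := by
          gcongr
      _ ≤ ((n : ℝ) + 3) ^ 2 * ‖c (n + 1 + 1)‖ * r ^ n := by
          rw [show ((n : ℝ) + 1) * (((n : ℝ) + 1 + 1) * ‖c (n + 1 + 1)‖)
            = (((n : ℝ) + 1) * ((n : ℝ) + 2)) * ‖c (n + 1 + 1)‖ by ring]
          gcongr
          nlinarith [Nat.cast_nonneg (α := ℝ) n]
      _ ≤ ‖c (n + 2)‖ * ((n : ℝ) + 2 + 1) ^ 2 * r ^ n :=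
          le_of_eq (by rw [show n + 1 + 1 = n + 2 from rfl]; ring)
  have hhs0 := hsum0.hasSum
  have hhs1 := hsum1.hasSum
  have hhs2 := hsum2.hasSum
  rw [hD2, hD1]
  set S0 : ℂ := ∑' n : ℕ, c n * t ^ n with hS0def
  set S1 : ℂ := ∑' n : ℕ, d1 n * t ^ n with hS1def
  set S2 : ℂ := ∑' n : ℕ, ((n : ℂ) + 1) * d1 (n + 1) * t ^ n with hS2def
  -- shifted sums
  have hA : HasSum (fun n : ℕ => (n : ℂ) * ((n : ℂ) + 1) * c (n + 1) * t ^ n) (t * S2) := by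
    have h1 : HasSum (fun n : ℕ =>
        ((n + 1 : ℕ) : ℂ) * (((n + 1 : ℕ) : ℂ) + 1) * c ((n + 1) + 1) * t ^ (n + 1))
        (S2 * t) := by
      convert hhs2.mul_right t using 1
      · rfl
      funext n
      push_cast [hd1def]
      ring
    have h2 := (hasSum_nat_add_iff
      (f := fun n : ℕ => (n : ℂ) * ((n : ℂ) + 1) * c (n + 1) * t ^ n) 1).1 h1
    have h3 : S2 * t + ∑ i ∈ Finset.range 1,
        (fun n : ℕ => (n : ℂ) * ((n : ℂ) + 1) * c (n + 1) * t ^ n) i = t * S2 := by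
      simp [Finset.sum_range_one]
      ring
    rwa [h3] at h2
  have hB : HasSum (fun n : ℕ => (n : ℂ) * ((n : ℂ) - 1) * c n * t ^ n) (t ^ 2 * S2) := by
    have h1 : HasSum (fun n : ℕ =>
        ((n + 2 : ℕ) : ℂ) * (((n + 2 : ℕ) : ℂ) - 1) * c (n + 2) * t ^ (n + 2))
        (S2 * t ^ 2) := by
      convert hhs2.mul_right (t ^ 2) using 1
      · rfl
      funext n
      push_cast [hd1def]
      ring
    have h2 := (hasSum_nat_add_iff
      (f := fun n : ℕ => (n : ℂ) * ((n : ℂ) - 1) * c n * t ^ n) 2).1 h1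
    have h3 : S2 * t ^ 2 + ∑ i ∈ Finset.range 2,
        (fun n : ℕ => (n : ℂ) * ((n : ℂ) - 1) * c n * t ^ n) i = t ^ 2 * S2 := by
      rw [Finset.sum_range_succ, Finset.sum_range_one]
      norm_num
      ring
    rwa [h3] at h2
  have hH : HasSum (fun n : ℕ => (n : ℂ) * c n * t ^ n) (t * S1) := by
    have h1 : HasSum (fun n : ℕ =>
        ((n + 1 : ℕ) : ℂ) * c (n + 1) * t ^ (n + 1)) (S1 * t) := by
      convert hhs1.mul_right t using 1
      · rfl
      funext n
      push_cast [hd1def]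
      ring
    have h2 := (hasSum_nat_add_iff
      (f := fun n : ℕ => (n : ℂ) * c n * t ^ n) 1).1 h1
    have h3 : S1 * t + ∑ i ∈ Finset.range 1,
        (fun n : ℕ => (n : ℂ) * c n * t ^ n) i = t * S1 := by
      simp [Finset.sum_range_one]
      ring
    rwa [h3] at h2
  have total : HasSum (fun n : ℕ =>
      (n : ℂ) * ((n : ℂ) + 1) * c (n + 1) * t ^ n - (n : ℂ) * ((n : ℂ) - 1) * c n * t ^ n
        + (C : ℂ) * (d1 n * t ^ n) - ((A : ℂ) + (B : ℂ) + 1) * ((n : ℂ) * c n * t ^ n)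
        - (A : ℂ) * (B : ℂ) * (c n * t ^ n))
      (t * S2 - t ^ 2 * S2 + (C : ℂ) * S1 - ((A : ℂ) + (B : ℂ) + 1) * (t * S1)
        - (A : ℂ) * (B : ℂ) * S0) :=
    (((hA.sub hB).add (hhs1.mul_left (C : ℂ))).sub
      (hH.mul_left ((A : ℂ) + (B : ℂ) + 1))).sub (hhs0.mul_left ((A : ℂ) * (B : ℂ)))
  rw [show (fun n : ℕ =>
      (n : ℂ) * ((n : ℂ) + 1) * c (n + 1) * t ^ n - (n : ℂ) * ((n : ℂ) - 1) * c n * t ^ n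
        + (C : ℂ) * (d1 n * t ^ n) - ((A : ℂ) + (B : ℂ) + 1) * ((n : ℂ) * c n * t ^ n)
        - (A : ℂ) * (B : ℂ) * (c n * t ^ n)) = (fun _ : ℕ => (0 : ℂ)) from
    funext fun n => by
      simp only [hd1def]
      linear_combination (t ^ n) * hrec n] at total
  have hV : t * S2 - t ^ 2 * S2 + (C : ℂ) * S1 - ((A : ℂ) + (B : ℂ) + 1) * (t * S1)
      - (A : ℂ) * (B : ℂ) * S0 = 0 := total.unique hasSum_zero
  linear_combination hV
/-- The hypergeometric series satisfies the hypergeometric differential equation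
`t(1-t)y'' + (C - (A+B+1)t)y' - AB·y = 0` on the open unit disc. -/
theorem hypergeometric_ODE (A B C : ℝ) (hC : ∀ n : ℕ, C ≠ -(n : ℝ)) :
    ∀ t : ℂ, ‖t‖ < 1 →
      t * (1 - t) *
          iteratedDeriv 2
            (fun s : ℂ => ∑' n : ℕ,
              (ascPochhammer ℂ n).eval (A : ℂ) * (ascPochhammer ℂ n).eval (B : ℂ) /
                ((ascPochhammer ℂ n).eval (C : ℂ) * (n.factorial : ℂ)) * s ^ n) t +
        ((C : ℂ) - ((A : ℂ) + (B : ℂ) + 1) * t) *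
          deriv
            (fun s : ℂ => ∑' n : ℕ,
              (ascPochhammer ℂ n).eval (A : ℂ) * (ascPochhammer ℂ n).eval (B : ℂ) /
                ((ascPochhammer ℂ n).eval (C : ℂ) * (n.factorial : ℂ)) * s ^ n) t -
        (A : ℂ) * (B : ℂ) *
          (∑' n : ℕ,
            (ascPochhammer ℂ n).eval (A : ℂ) * (ascPochhammer ℂ n).eval (B : ℂ) /
              ((ascPochhammer ℂ n).eval (C : ℂ) * (n.factorial : ℂ)) * t ^ n) = 0 := by
  have hCn : ∀ n : ℕ, (n : ℝ) + C ≠ 0 := fun n h => hC n (by linarith)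
  set c : ℕ → ℂ := fun n =>
    (ascPochhammer ℂ n).eval (A : ℂ) * (ascPochhammer ℂ n).eval (B : ℂ) /
      ((ascPochhammer ℂ n).eval (C : ℂ) * (n.factorial : ℂ)) with hcdef
  have hPC : ∀ n : ℕ, (ascPochhammer ℂ n).eval (C : ℂ) ≠ 0 := by
    intro n
    induction n with
    | zero => simp [ascPochhammer_zero]
    | succ m ih =>
      rw [ascPochhammer_succ_eval]
      refine mul_ne_zero ih ?_
      intro h
      apply hCn m
      have h2 : (((m : ℝ) + C : ℝ) : ℂ) = 0 := by push_cast; linear_combination h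
      exact_mod_cast h2
  have hrec : ∀ n : ℕ, c (n + 1) * (((n : ℂ) + 1) * ((C : ℂ) + (n : ℂ)))
      = c n * (((A : ℂ) + (n : ℂ)) * ((B : ℂ) + (n : ℂ))) := by
    intro n
    have hfact : ((n.factorial : ℂ)) ≠ 0 := Nat.cast_ne_zero.2 n.factorial_ne_zero
    have hcplus : ((C : ℂ) + (n : ℂ)) ≠ 0 := by
      intro h
      apply hCn n
      have h2 : (((n : ℝ) + C : ℝ) : ℂ) = 0 := by push_cast; linear_combination h
      exact_mod_cast h2
    have h1 : ((n : ℂ) + 1) ≠ 0 := Nat.cast_add_one_ne_zero n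
    have hPCn := hPC n
    simp only [hcdef, ascPochhammer_succ_eval, Nat.factorial_succ, Nat.cast_mul]
    field_simp
    push_cast
    ring
  exact key A B C c hCn hrec
end
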